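/- Let U ⊆ ℂ be open, p ∈ U, and φ : U \ {p} → ℂ ∪ {∞} holomorphic. If there exists a point q in the Riemann sphere and a neighborhood V of q in the sphere such that φ(U \ {p}) misses a nonempty open subset of the sphere (i.e. φ omits an open set of values near p), then p is a removable singularity or a pole of φ; in particular φ extends to a holomorphic map U → ℂ ∪ {∞}. -/

import Mathlib

open Filter Metric Set Function Topology

/-- Casorati–Weierstrass type extension: Let `U ⊆ ℂ` be open, `p ∈ U`, and
`φ` holomorphic on `U \ {p}` (as a map to the Riemann sphere; here represented by its
finite values).  If `φ` omits a nonempty open set of values (a ball `B_r(q)` in `ℂ`),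
then `p` is a removable singularity or a pole of `φ`; in particular `φ` extends
holomorphically across `p` as a map to the Riemann sphere. -/
theorem casorati_weierstrass_extension
    (U : Set ℂ) (hU : IsOpen U) (p : ℂ) (hp : p ∈ U)
    (φ : ℂ → ℂ)
    (hφ : DifferentiableOn ℂ φ (U \ {p}))
    (homit : ∃ (q : ℂ) (r : ℝ), 0 < r ∧ ∀ z ∈ U \ {p}, φ z ∉ Metric.ball q r) :
    (∃ g : ℂ → ℂ, DifferentiableOn ℂ g U ∧ Set.EqOn φ g (U \ {p})) ∨
    Filter.Tendsto (fun z => ‖φ z‖) (nhdsWithin p {p}ᶜ) Filter.atTop := by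
  obtain ⟨q, r, hr, hmiss⟩ := homit
  set ψ : ℂ → ℂ := fun z => (φ z - q)⁻¹ with hψdef
  have hdist : ∀ z ∈ U \ {p}, r ≤ ‖φ z - q‖ := by
    intro z hz
    have := hmiss z hz
    simpa [Metric.mem_ball, dist_eq_norm, not_lt, norm_sub_rev] using this
  have hne : ∀ z ∈ U \ {p}, φ z - q ≠ 0 := by
    intro z hz h0
    have := hdist z hz
    rw [h0, norm_zero] at this
    linarith
  have hψdiff : DifferentiableOn ℂ ψ (U \ {p}) := by
    exact (hφ.sub_const q).inv (fun z hz => hne z hz)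
  have hψbdd : BddAbove (norm ∘ ψ '' (U \ {p})) := by
    refine ⟨r⁻¹, ?_⟩
    rintro x ⟨z, hz, rfl⟩
    simp only [comp_apply, hψdef, norm_inv]
    exact inv_anti₀ hr (hdist z hz)
  set h : ℂ → ℂ := Function.update ψ p (limUnder (𝓝[≠] p) ψ) with hhdef
  have hUnhds : U ∈ 𝓝 p := hU.mem_nhds hp
  have hhdiff : DifferentiableOn ℂ h U :=
    Complex.differentiableOn_update_limUnder_of_bddAbove hUnhds hψdiff hψbdd
  have hheq : ∀ z ∈ U \ {p}, h z = ψ z := by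
    intro z hz
    exact Function.update_of_ne hz.2 _ _
  have hhne : ∀ z ∈ U \ {p}, h z ≠ 0 := by
    intro z hz
    rw [hheq z hz]
    exact inv_ne_zero (hne z hz)
  by_cases h0 : h p = 0
  · -- pole case
    right
    have hcont : ContinuousAt h p := (hhdiff.differentiableAt hUnhds).continuousAt
    have htend : Tendsto (fun z => ‖h z‖) (𝓝[≠] p) (𝓝 0) := by
      have := (hcont.norm.continuousWithinAt (s := {p}ᶜ)).tendsto
      simpa [h0] using this
    have hevU : ∀ᶠ z in 𝓝[≠] p, z ∈ U \ {p} := by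
      filter_upwards [nhdsWithin_le_nhds hUnhds, self_mem_nhdsWithin] with z h1 h2
      exact ⟨h1, h2⟩
    have htend' : Tendsto (fun z => ‖h z‖) (𝓝[≠] p) (𝓝[>] 0) := by
      rw [tendsto_nhdsWithin_iff]
      refine ⟨htend, ?_⟩
      filter_upwards [hevU] with z hz
      exact norm_pos_iff.2 (hhne z hz)
    have hinv : Tendsto (fun z => ‖h z‖⁻¹) (𝓝[≠] p) atTop :=
      tendsto_inv_nhdsGT_zero.comp htend'
    have hkey : Tendsto (fun z => ‖φ z - q‖) (𝓝[≠] p) atTop := by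
      refine hinv.congr' ?_
      filter_upwards [hevU] with z hz
      rw [hheq z hz, hψdef]
      simp [norm_inv, inv_inv]
    have : Tendsto (fun z => ‖φ z‖) (𝓝[≠] p) atTop := by
      refine tendsto_atTop_mono' _ ?_ (hkey.atTop_add (tendsto_const_nhds (x := -‖q‖)))
      filter_upwards with z
      have := norm_sub_norm_le (φ z - q) (-q)
      simp only [sub_neg_eq_add, sub_add_cancel] at this
      linarith [this, norm_neg q]
    exact this
  · -- removable case
    left
    refine ⟨fun z => q + (h z)⁻¹, ?_, ?_⟩
    · refine DifferentiableOn.const_add q ?_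
      refine hhdiff.inv ?_
      intro z hz
      by_cases hzp : z = p
      · subst hzp; exact h0
      · exact hhne z ⟨hz, hzp⟩
    · intro z hz
      show φ z = q + (h z)⁻¹
      rw [hheq z hz, hψdef]
      simp
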